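/- For m₁, m₂ > 0 real numbers, the contour integral ∫_{-∞}^{∞} e^{2πit}/(-t + i(m₁+m₂))² dt equals -4π² e^{-2π(m₁+m₂)}. Consequently, -(m₁m₂/π) times this integral equals 4π(m₁m₂)e^{-2π(m₁+m₂)}. -/

import Mathlib

open Real MeasureTheory Set Filter FourierTransform RealInnerProductSpace
open scoped Topology

lemma aux_integrable {a : ℂ} (ha : 0 < a.re) :
    IntegrableOn (fun s : ℝ => (s:ℂ) * Complex.exp (-(a*s))) (Ioi 0) := by
  have hg : IntegrableOn (fun x : ℝ => x ^ (1:ℝ) * Real.exp (-a.re * x ^ (1:ℝ))) (Ioi 0) :=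
    integrableOn_rpow_mul_exp_neg_mul_rpow (by norm_num) zero_lt_one ha
  refine Integrable.mono' hg ?_ ?_
  · exact (Complex.continuous_ofReal.mul
      (Complex.continuous_exp.comp (continuous_const.mul Complex.continuous_ofReal).neg)).aestronglyMeasurable
  · filter_upwards [ae_restrict_mem measurableSet_Ioi] with s hs
    have hs0 : (0:ℝ) < s := hs
    simp only [Real.rpow_one]
    rw [norm_mul, Complex.norm_real, Real.norm_eq_abs, Complex.norm_exp]
    have h3 : (-(a * (s:ℂ))).re = -a.re * s := by simp [Complex.mul_re]; try ring
    rw [h3, abs_of_pos hs0]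

lemma aux_int {a : ℂ} (ha : 0 < a.re) :
    (∫ s : ℝ in Ioi (0:ℝ), (s:ℂ) * Complex.exp (-(a*s))) = (a^2)⁻¹ := by
  have ha0 : a ≠ 0 := by intro h; rw [h] at ha; simp at ha
  set F : ℝ → ℂ := fun s => -(((s:ℂ) * a⁻¹ + (a^2)⁻¹) * Complex.exp (-(a*s))) with hF
  have hderiv : ∀ x : ℝ, x ∈ Ici (0:ℝ) → HasDerivAt F ((x:ℂ) * Complex.exp (-(a*x))) x := by
    intro x _
    have hs : HasDerivAt (fun s : ℝ => (s:ℂ)) 1 x := Complex.ofRealCLM.hasDerivAt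
    have he : HasDerivAt (fun s : ℝ => Complex.exp (-(a*s))) (Complex.exp (-(a*x)) * (-a)) x := by
      have h1 : HasDerivAt (fun s : ℝ => -(a * (s:ℂ))) (-a) x := by
        simpa using (hs.const_mul a).fun_neg
      simpa using h1.cexp
    have h2 := (((hs.mul_const a⁻¹).add_const ((a^2)⁻¹)).fun_mul he).fun_neg
    convert h2 using 1
    case e'_4 => rfl
    field_simp
    ring
  have htend : Tendsto F atTop (𝓝 0) := by
    have hb := ha
    have hmul : Tendsto (fun s : ℝ => a.re * s) atTop atTop := tendsto_id.const_mul_atTop ha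
    have h1 : Tendsto (fun s : ℝ => s * Real.exp (-(a.re * s))) atTop (𝓝 0) := by
      have h := (tendsto_pow_mul_exp_neg_atTop_nhds_zero 1).comp hmul
      have h2 := h.const_mul (a.re)⁻¹
      rw [mul_zero] at h2
      refine h2.congr fun s => ?_
      simp only [Function.comp_apply, pow_one]
      field_simp
    have h2 : Tendsto (fun s : ℝ => Real.exp (-(a.re * s))) atTop (𝓝 0) :=
      Real.tendsto_exp_neg_atTop_nhds_zero.comp hmul
    have hg : Tendsto (fun s : ℝ =>
        ‖a⁻¹‖ * (s * Real.exp (-(a.re * s))) + ‖(a^2)⁻¹‖ * Real.exp (-(a.re * s)))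
        atTop (𝓝 0) := by
      have := (h1.const_mul ‖a⁻¹‖).add (h2.const_mul ‖(a^2)⁻¹‖)
      simpa using this
    refine squeeze_zero_norm' ?_ hg
    filter_upwards [eventually_ge_atTop (0:ℝ)] with s hs
    rw [hF]
    simp only [norm_neg, norm_mul]
    rw [Complex.norm_exp]
    have hre : (-(a * (s:ℂ))).re = -(a.re * s) := by simp [Complex.mul_re]; try ring
    rw [hre]
    have hrw : ‖a⁻¹‖ * (s * Real.exp (-(a.re * s))) + ‖(a^2)⁻¹‖ * Real.exp (-(a.re * s))
        = (‖a⁻¹‖ * s + ‖(a^2)⁻¹‖) * Real.exp (-(a.re * s)) := by ring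
    rw [hrw]
    refine mul_le_mul_of_nonneg_right ?_ (Real.exp_nonneg _)
    calc ‖(s:ℂ) * a⁻¹ + (a^2)⁻¹‖ ≤ ‖(s:ℂ) * a⁻¹‖ + ‖(a^2)⁻¹‖ := norm_add_le _ _
      _ = ‖a⁻¹‖ * s + ‖(a^2)⁻¹‖ := by
          rw [norm_mul, Complex.norm_real, Real.norm_eq_abs, abs_of_nonneg hs]; ring
  have := integral_Ioi_of_hasDerivAt_of_tendsto' hderiv (aux_integrable ha) htend
  rw [this, hF]
  simp


lemma main_int {c : ℝ} (hc : 0 < c) :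
    (∫ t : ℝ, Complex.exp (2 * π * Complex.I * t) / (-(t : ℂ) + Complex.I * c) ^ 2)
      = -4 * π ^ 2 * Complex.exp (-2 * π * c) := by
  set g : ℝ → ℂ := fun s => (s:ℂ) * Complex.exp (-(((2*π*c : ℝ) : ℂ) * s)) with hg
  set f : ℝ → ℂ := (Ici (0:ℝ)).indicator g with hf
  have hcre : ∀ t : ℝ, (0:ℝ) < ((2*π*(c + t*Complex.I))).re := by
    intro t
    have : ((2*π*(c + t*Complex.I))).re = 2*π*c := by simp [Complex.mul_re]
    rw [this]; positivity
  have hf_int : Integrable f := by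
    rw [hf, integrable_indicator_iff measurableSet_Ici, integrableOn_Ici_iff_integrableOn_Ioi]
    exact aux_integrable (a := ((2*π*c : ℝ) : ℂ)) (by simp; positivity)
  have hFf : ∀ t : ℝ, 𝓕 f t = ((2*π*(c + t*Complex.I))^2)⁻¹ := by
    intro t
    rw [Real.fourier_eq']
    have step1 : (fun v : ℝ => Complex.exp (((-2*π*⟪v,t⟫ : ℝ) : ℂ) * Complex.I) • f v)
        = (Ici (0:ℝ)).indicator
          (fun v : ℝ => (v:ℂ) * Complex.exp (-((2*π*(c + t*Complex.I)) * v))) := by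
      ext v
      by_cases h : v ∈ Ici (0:ℝ)
      · rw [indicator_of_mem h, hf, indicator_of_mem h, hg]
        rw [smul_eq_mul, mul_comm, mul_assoc, ← Complex.exp_add]
        congr 1
        push_cast [RCLike.inner_apply, starRingEnd_apply, star_trivial]
        ring
      · rw [indicator_of_notMem h, hf, indicator_of_notMem h, smul_zero]
    rw [step1, integral_indicator measurableSet_Ici, integral_Ici_eq_integral_Ioi]
    exact aux_int (hcre t)
  have hFeq : 𝓕 f = fun t : ℝ => ((2*π*(c + t*Complex.I))^2)⁻¹ := funext hFf
  have hne : ∀ t : ℝ, (2*π*(c + t*Complex.I)) ≠ 0 := by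
    intro t h
    have := hcre t
    rw [h] at this; simp at this
  have hFcont : Continuous fun t : ℝ => ((2*π*(c + t*Complex.I))^2)⁻¹ :=
    ((continuous_const.mul (continuous_const.add
        (Complex.continuous_ofReal.mul continuous_const))).pow 2).inv₀
      (fun t => pow_ne_zero 2 (hne t))
  have hFf_int : Integrable (𝓕 f) := by
    rw [hFeq]
    have hmaj : Integrable (fun t : ℝ => (4*π^2)⁻¹ * (c^2)⁻¹ * ((1 + (t/c)^2)⁻¹)) :=
      (integrable_inv_one_add_sq.comp_div hc.ne').const_mul _
    refine hmaj.mono' hFcont.aestronglyMeasurable ?_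
    filter_upwards with t
    have habs : ‖(2*π*(c + t*Complex.I))‖ ^ 2 = 4*π^2*(c^2+t^2) := by
      rw [Complex.sq_norm]
      simp [Complex.normSq_apply, Complex.mul_re, Complex.mul_im]
      try ring
    have h1 : ‖((2*π*(c + t*Complex.I))^2)⁻¹‖ = (4*π^2*(c^2+t^2))⁻¹ := by
      rw [norm_inv, norm_pow, habs]
    rw [h1, show (4*π^2)⁻¹*(c^2)⁻¹*((1 + (t/c)^2)⁻¹) = (4*π^2*(c^2+t^2))⁻¹ by
      rw [← mul_inv, ← mul_inv]
      congr 1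
      field_simp]
  have hcont : ContinuousAt f 1 := by
    have hev : ∀ᶠ s in 𝓝 (1:ℝ), g s = f s := by
      filter_upwards [Ioi_mem_nhds (show (0:ℝ) < 1 by norm_num)] with s hs
      rw [hf]
      exact (indicator_of_mem (show s ∈ Ici (0:ℝ) from Set.mem_Ici.mpr (le_of_lt (Set.mem_Ioi.mp hs))) g).symm
    exact ((Complex.continuous_ofReal.mul
      (Complex.continuous_exp.comp (continuous_const.mul Complex.continuous_ofReal).neg)).continuousAt).congr hev
  have hinv : 𝓕⁻ (𝓕 f) 1 = f 1 := hf_int.fourierInv_fourier_eq hFf_int hcont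
  have hstep : (fun t : ℝ => Complex.exp (2 * π * Complex.I * t) / (-(t : ℂ) + Complex.I * c) ^ 2)
      = fun t : ℝ => (-4*(π:ℂ)^2) * (Complex.exp (((2*π*⟪t,(1:ℝ)⟫ : ℝ) : ℂ) * Complex.I) • 𝓕 f t) := by
    ext t
    rw [hFf t, smul_eq_mul]
    have harg : (((2*π*⟪t,(1:ℝ)⟫ : ℝ) : ℂ) * Complex.I) = 2 * π * Complex.I * t := by
      push_cast [RCLike.inner_apply, starRingEnd_apply, star_trivial]
      ring
    rw [harg]
    have hz : ((2*π*(c + t*Complex.I))^2) = (-4*(π:ℂ)^2) * (-(t:ℂ) + Complex.I*c)^2 := by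
      linear_combination (4*(π:ℂ)^2*((c:ℂ)+(t:ℂ)*Complex.I)^2 - 8*(π:ℂ)^2*c*t*Complex.I
        + 4*(π:ℂ)^2*t^2*(1 - Complex.I^2)) * Complex.I_sq
    rw [hz]
    have hne2 : (-(t:ℂ) + Complex.I*c) ≠ 0 := by
      intro h
      have h2 : (-(t:ℂ) + Complex.I*c).im = c := by simp
      rw [h] at h2; simp at h2
      exact hc.ne' h2.symm
    have h4 : (-4*(π:ℂ)^2) ≠ 0 := by
      simp
    rw [mul_inv, div_eq_mul_inv]
    have hfin : (-4*(π:ℂ)^2) * (Complex.exp (2*↑π*Complex.I*↑t) * ((-4*(π:ℂ)^2)⁻¹ *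
          ((-(t:ℂ)+Complex.I*↑c)^2)⁻¹))
        = ((-4*(π:ℂ)^2) * (-4*(π:ℂ)^2)⁻¹) * (Complex.exp (2*↑π*Complex.I*↑t) *
          ((-(t:ℂ)+Complex.I*↑c)^2)⁻¹) := by ring
    rw [hfin, mul_inv_cancel₀ h4, one_mul]
  calc (∫ t : ℝ, Complex.exp (2 * π * Complex.I * t) / (-(t : ℂ) + Complex.I * c) ^ 2)
      = ∫ t : ℝ, (-4*(π:ℂ)^2) * (Complex.exp (((2*π*⟪t,(1:ℝ)⟫ : ℝ):ℂ) * Complex.I) • 𝓕 f t) := by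
        rw [hstep]
    _ = (-4*(π:ℂ)^2) * ∫ t : ℝ, Complex.exp (((2*π*⟪t,(1:ℝ)⟫ : ℝ):ℂ) * Complex.I) • 𝓕 f t :=
        integral_const_mul _ _
    _ = (-4*(π:ℂ)^2) * 𝓕⁻ (𝓕 f) 1 := by rw [Real.fourierInv_eq']
    _ = (-4*(π:ℂ)^2) * f 1 := by rw [hinv]
    _ = -4 * π ^ 2 * Complex.exp (-2 * π * c) := by
        rw [hf, indicator_of_mem (show (1:ℝ) ∈ Ici (0:ℝ) by norm_num) g, hg]
        push_cast
        ring_nf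

theorem stmt_0 (m₁ m₂ : ℝ) (h₁ : 0 < m₁) (h₂ : 0 < m₂) :
    (∫ t : ℝ, Complex.exp (2 * π * Complex.I * t) /
      (-(t : ℂ) + Complex.I * (m₁ + m₂)) ^ 2)
      = -4 * π ^ 2 * Complex.exp (-2 * π * (m₁ + m₂)) ∧
    -((m₁ * m₂ : ℂ) / π) * (∫ t : ℝ, Complex.exp (2 * π * Complex.I * t) /
      (-(t : ℂ) + Complex.I * (m₁ + m₂)) ^ 2)
      = 4 * π * (m₁ * m₂) * Complex.exp (-2 * π * (m₁ + m₂)) := by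
  have hc : 0 < m₁ + m₂ := by positivity
  have e1 : ((m₁:ℂ) + m₂) = ((m₁ + m₂ : ℝ) : ℂ) := by push_cast; ring
  have h := main_int hc
  have h' : (∫ t : ℝ, Complex.exp (2 * π * Complex.I * t) /
      (-(t : ℂ) + Complex.I * (m₁ + m₂)) ^ 2)
      = -4 * π ^ 2 * Complex.exp (-2 * π * (m₁ + m₂)) := by
    rw [e1]; exact h
  refine ⟨h', ?_⟩
  rw [h']
  have hπ : (π : ℂ) ≠ 0 := by exact_mod_cast Real.pi_ne_zero
  field_simp
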